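/- arXiv:1610.07237 — 4 statements merged into one kernel-verified Lean document; each statement's English description precedes it below -/
import Mathlib

section
/- For a product state ρ_A ⊗ ρ_B on a bipartite system, the l1-norm of coherence satisfies C_{l1}(ρ_A ⊗ ρ_B) + 1 = (C_{l1}(ρ_A) + 1)(C_{l1}(ρ_B) + 1), where coherence is measured in the product basis. -/
open Matrix Kronecker
open scoped ComplexOrder

/-- The `l₁`-norm of coherence of a state in the standard (reference) basis:
`C_{l₁}(ρ) = ∑_{i≠j} |ρ_{ij}| = ∑_{i,j} |ρ_{ij}| - 1` (for a density matrix, whose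
diagonal entries are nonnegative reals summing to 1). -/
noncomputable def Cl1 {n : Type*} [Fintype n] (ρ : Matrix n n ℂ) : ℝ :=
  (∑ i, ∑ j, ‖ρ i j‖) - 1

theorem stmt_0 {m n : Type*} [Fintype m] [DecidableEq m] [Fintype n] [DecidableEq n]
    (ρA : Matrix m m ℂ) (ρB : Matrix n n ℂ)
    (hA : ρA.PosSemidef) (hA1 : ρA.trace = 1)
    (hB : ρB.PosSemidef) (hB1 : ρB.trace = 1) :
    Cl1 (ρA ⊗ₖ ρB) + 1 = (Cl1 ρA + 1) * (Cl1 ρB + 1) := by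
  unfold Cl1
  simp only [sub_add_cancel, kroneckerMap_apply, norm_mul]
  rw [Finset.sum_mul_sum]
  simp only [Finset.sum_mul_sum, Fintype.sum_prod_type]
end

section
/- For a three-qubit product state ρ_{ABC} = ρ_A ⊗ ρ_B ⊗ ρ_C, and any choice of local observables M_K^i (K = A,B,C; i = 1,2) whose eigenbases define reference bases, the combination C_{l1}(ρ_{ABC}, M_A^1, M_B^1, M_C^2) + C_{l1}(ρ_{ABC}, M_A^1, M_B^2, M_C^1) + C_{l1}(ρ_{ABC}, M_A^2, M_B^1, M_C^1) − C_{l1}(ρ_{ABC}, M_A^2, M_B^2, M_C^2) is at most 14. -/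
open Matrix Kronecker
open scoped ComplexOrder

/-- The `l₁`-norm of coherence of `ρ` in the basis described by the unitary `U`
(whose rows are the conjugates of the basis vectors, e.g. the eigenbasis of an
observable): the matrix entries in that basis are those of `U ρ Uᴴ`. -/
noncomputable def Cl1B {n : Type*} [Fintype n] (ρ U : Matrix n n ℂ) : ℝ :=
  Cl1 (U * ρ * Uᴴ)


noncomputable def S' {n : Type*} [Fintype n] (ρ : Matrix n n ℂ) : ℝ :=
  ∑ i, ∑ j, ‖ρ i j‖

lemma S'_kron {n m : Type*} [Fintype n] [Fintype m] (A : Matrix n n ℂ) (B : Matrix m m ℂ) :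
    S' (A ⊗ₖ B) = S' A * S' B := by
  simp only [S', kroneckerMap_apply, norm_mul, Fintype.sum_prod_type]
  rw [Finset.sum_mul]
  refine Finset.sum_congr rfl fun i _ => ?_
  rw [Finset.sum_comm, Finset.sum_mul]
  refine Finset.sum_congr rfl fun j _ => ?_
  rw [Finset.mul_sum]
  exact Finset.sum_congr rfl fun k _ => (Finset.mul_sum _ _ _).symm

lemma kron_ct {n m : Type*} [Fintype n] [Fintype m] (A : Matrix n n ℂ) (B : Matrix m m ℂ) :
    (A ⊗ₖ B)ᴴ = Aᴴ ⊗ₖ Bᴴ := by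
  ext ⟨i, k⟩ ⟨j, l⟩
  simp [conjTranspose_apply, kroneckerMap_apply]

lemma qubit_S {ρ : Matrix (Fin 2) (Fin 2) ℂ} (hρ : ρ.PosSemidef) (h1 : ρ.trace = 1) :
    1 ≤ S' ρ ∧ S' ρ ≤ 2 := by
  have hH := hρ.1
  have hd : ∀ i, 0 ≤ ρ i i := fun i => by
    exact hρ.diag_nonneg
  set a := (ρ 0 0).re with ha
  set b := (ρ 1 1).re with hb
  set t := ‖ρ 0 1‖ with ht
  have h00 : ρ 0 0 = (a : ℂ) := by
    have := hd 0
    rw [Complex.le_def] at this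
    exact Complex.ext rfl (by simpa using this.2.symm)
  have h11 : ρ 1 1 = (b : ℂ) := by
    have := hd 1
    rw [Complex.le_def] at this
    exact Complex.ext rfl (by simpa using this.2.symm)
  have ha0 : 0 ≤ a := by have := hd 0; rw [Complex.le_def] at this; simpa using this.1
  have hb0 : 0 ≤ b := by have := hd 1; rw [Complex.le_def] at this; simpa using this.1
  have ht0 : 0 ≤ t := norm_nonneg _
  have hab : a + b = 1 := by
    have := h1
    rw [Matrix.trace_fin_two, h00, h11] at this
    exact_mod_cast this
  have h10 : ρ 1 0 = star (ρ 0 1) := (hH.apply 1 0).symm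
  have hdet : a * b - t ^ 2 = ∏ i, hH.eigenvalues i := by
    have e1 : ρ.det = ((∏ i, hH.eigenvalues i : ℝ) : ℂ) := by
      rw [hH.det_eq_prod_eigenvalues]; push_cast; rfl
    have e2 : ρ.det = ((a * b - t ^ 2 : ℝ) : ℂ) := by
      rw [Matrix.det_fin_two, h00, h11, h10, Complex.star_def,
        Complex.mul_conj, ← Complex.sq_norm]
      push_cast
      ring
    exact_mod_cast e2.symm.trans e1
  have hdet0 : 0 ≤ a * b - t ^ 2 := by
    rw [hdet]; exact Finset.prod_nonneg fun i _ => hρ.eigenvalues_nonneg i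
  have hS : S' ρ = a + t + (t + b) := by
    simp [S', Fin.sum_univ_two, h00, h11, h10, Complex.norm_real, Real.norm_eq_abs, abs_of_nonneg ha0,
      abs_of_nonneg hb0, ← ht]
  constructor <;> rw [hS] <;> nlinarith [sq_nonneg (a - b)]

lemma qubit_S_conj {ρ U : Matrix (Fin 2) (Fin 2) ℂ} (hρ : ρ.PosSemidef) (h1 : ρ.trace = 1)
    (hU : U ∈ Matrix.unitaryGroup (Fin 2) ℂ) :
    1 ≤ S' (U * ρ * Uᴴ) ∧ S' (U * ρ * Uᴴ) ≤ 2 := by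
  refine qubit_S (hρ.mul_mul_conjTranspose_same U) ?_
  rw [Matrix.trace_mul_cycle, ← Matrix.star_eq_conjTranspose,
    Matrix.mem_unitaryGroup_iff'.mp hU, one_mul, h1]

lemma Cl1B_kron_eq (ρ1 ρ2 ρ3 U1 U2 U3 : Matrix (Fin 2) (Fin 2) ℂ) :
    Cl1B (ρ1 ⊗ₖ ρ2 ⊗ₖ ρ3) (U1 ⊗ₖ U2 ⊗ₖ U3)
      = S' (U1 * ρ1 * U1ᴴ) * S' (U2 * ρ2 * U2ᴴ) * S' (U3 * ρ3 * U3ᴴ) - 1 := by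
  have key : (U1 ⊗ₖ U2 ⊗ₖ U3) * (ρ1 ⊗ₖ ρ2 ⊗ₖ ρ3) * (U1 ⊗ₖ U2 ⊗ₖ U3)ᴴ
      = ((U1 * ρ1 * U1ᴴ) ⊗ₖ (U2 * ρ2 * U2ᴴ)) ⊗ₖ (U3 * ρ3 * U3ᴴ) := by
    rw [kron_ct, kron_ct, ← Matrix.mul_kronecker_mul, ← Matrix.mul_kronecker_mul,
      ← Matrix.mul_kronecker_mul, ← Matrix.mul_kronecker_mul]
  show S' _ - 1 = _
  rw [key, S'_kron, S'_kron]

theorem stmt_4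
    (ρA ρB ρC : Matrix (Fin 2) (Fin 2) ℂ)
    (hA : ρA.PosSemidef) (hA1 : ρA.trace = 1)
    (hB : ρB.PosSemidef) (hB1 : ρB.trace = 1)
    (hC : ρC.PosSemidef) (hC1 : ρC.trace = 1)
    -- unitaries diagonalizing the observables `M_K^i`, i.e. whose rows form the
    -- eigenbasis of `M_K^i` (any observable eigenbasis arises this way)
    (UA1 UA2 UB1 UB2 UC1 UC2 : Matrix (Fin 2) (Fin 2) ℂ)
    (hUA1 : UA1 ∈ Matrix.unitaryGroup (Fin 2) ℂ)
    (hUA2 : UA2 ∈ Matrix.unitaryGroup (Fin 2) ℂ)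
    (hUB1 : UB1 ∈ Matrix.unitaryGroup (Fin 2) ℂ)
    (hUB2 : UB2 ∈ Matrix.unitaryGroup (Fin 2) ℂ)
    (hUC1 : UC1 ∈ Matrix.unitaryGroup (Fin 2) ℂ)
    (hUC2 : UC2 ∈ Matrix.unitaryGroup (Fin 2) ℂ) :
    Cl1B (ρA ⊗ₖ ρB ⊗ₖ ρC) (UA1 ⊗ₖ UB1 ⊗ₖ UC2)
      + Cl1B (ρA ⊗ₖ ρB ⊗ₖ ρC) (UA1 ⊗ₖ UB2 ⊗ₖ UC1)
      + Cl1B (ρA ⊗ₖ ρB ⊗ₖ ρC) (UA2 ⊗ₖ UB1 ⊗ₖ UC1)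
      - Cl1B (ρA ⊗ₖ ρB ⊗ₖ ρC) (UA2 ⊗ₖ UB2 ⊗ₖ UC2) ≤ 14 := by
  obtain ⟨hA1l, hA1u⟩ := qubit_S_conj hA hA1 hUA1
  obtain ⟨hA2l, hA2u⟩ := qubit_S_conj hA hA1 hUA2
  obtain ⟨hB1l, hB1u⟩ := qubit_S_conj hB hB1 hUB1
  obtain ⟨hB2l, hB2u⟩ := qubit_S_conj hB hB1 hUB2
  obtain ⟨hC1l, hC1u⟩ := qubit_S_conj hC hC1 hUC1
  obtain ⟨hC2l, hC2u⟩ := qubit_S_conj hC hC1 hUC2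
  rw [Cl1B_kron_eq, Cl1B_kron_eq, Cl1B_kron_eq, Cl1B_kron_eq]
  set a1 := S' (UA1 * ρA * UA1ᴴ)
  set a2 := S' (UA2 * ρA * UA2ᴴ)
  set b1 := S' (UB1 * ρB * UB1ᴴ)
  set b2 := S' (UB2 * ρB * UB2ᴴ)
  set c1 := S' (UC1 * ρC * UC1ᴴ)
  set c2 := S' (UC2 * ρC * UC2ᴴ)
  have key : a1*b1*c2 + a1*b2*c1 + a2*b1*c1 - a2*b2*c2 ≤ 16 := by
    nlinarith [mul_nonneg (sub_nonneg.2 hA1u) (sub_nonneg.2 hB1u),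
      mul_nonneg (sub_nonneg.2 hA1u) (sub_nonneg.2 hC1u),
      mul_nonneg (sub_nonneg.2 hB1u) (sub_nonneg.2 hC1u),
      mul_nonneg (sub_nonneg.2 hA2u) (sub_nonneg.2 hB2u),
      mul_nonneg (sub_nonneg.2 hA2u) (sub_nonneg.2 hC2u),
      mul_nonneg (sub_nonneg.2 hB2u) (sub_nonneg.2 hC2u),
      mul_nonneg (sub_nonneg.2 hB1u) (sub_nonneg.2 hC2u),
      mul_nonneg (sub_nonneg.2 hB2u) (sub_nonneg.2 hC1u),
      mul_nonneg (sub_nonneg.2 hA2u) (sub_nonneg.2 hB1u),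
      mul_nonneg (mul_nonneg (sub_nonneg.2 hA2u) (sub_nonneg.2 hB2u)) (sub_nonneg.2 hC2u),
      mul_nonneg (mul_nonneg (sub_nonneg.2 hA1u) (sub_nonneg.2 hB1u)) (sub_nonneg.2 hC2u),
      mul_nonneg (mul_nonneg (sub_nonneg.2 hA1u) (sub_nonneg.2 hB2u)) (sub_nonneg.2 hC1u),
      mul_nonneg (mul_nonneg (sub_nonneg.2 hA2u) (sub_nonneg.2 hB1u)) (sub_nonneg.2 hC1u),
      mul_nonneg (sub_nonneg.2 hA2l) (sub_nonneg.2 hB2l),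
      mul_nonneg (sub_nonneg.2 hA2l) (sub_nonneg.2 hC2l),
      mul_nonneg (sub_nonneg.2 hB2l) (sub_nonneg.2 hC2l)]
  linarith
end

section
/- For a three-qubit product state ρ_A ⊗ ρ_B ⊗ ρ_C and local observables M_K^i (K = A,B,C; i = 1,2), the combination C_r(ρ, M_A^1, M_B^1, M_C^2) + C_r(ρ, M_A^1, M_B^2, M_C^1) + C_r(ρ, M_A^2, M_B^1, M_C^1) − C_r(ρ, M_A^2, M_B^2, M_C^2) equals 2[C_r(ρ_A, M_A^1) + C_r(ρ_B, M_B^1) + C_r(ρ_C, M_C^1)] and is at most 6. -/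
open Matrix Kronecker
open scoped ComplexOrder

/-- Von Neumann entropy (base 2) of a Hermitian matrix, via its eigenvalues. -/
noncomputable def vnEntropy {n : Type*} [Fintype n] [DecidableEq n] (ρ : Matrix n n ℂ) : ℝ :=
  if h : ρ.IsHermitian then (∑ i, Real.negMulLog (h.eigenvalues i)) / Real.log 2 else 0

/-- Diagonal part of a matrix in the standard reference basis. -/
noncomputable def diagPart {n : Type*} [Fintype n] [DecidableEq n] (ρ : Matrix n n ℂ) :
    Matrix n n ℂ :=
  Matrix.diagonal (fun i => ρ i i)

/-- Relative entropy of coherence in the standard reference basis. -/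
noncomputable def Cr {n : Type*} [Fintype n] [DecidableEq n] (ρ : Matrix n n ℂ) : ℝ :=
  vnEntropy (diagPart ρ) - vnEntropy ρ

/-- Relative entropy of coherence of `ρ` in the basis described by the unitary `U`
(e.g. the eigenbasis of an observable). -/
noncomputable def CrB {n : Type*} [Fintype n] [DecidableEq n] (ρ U : Matrix n n ℂ) : ℝ :=
  Cr (U * ρ * Uᴴ)

open Polynomial Kronecker

variable {n : Type*} [Fintype n] [DecidableEq n]

/-- charpoly is invariant under unitary conjugation. -/
lemma my_charpoly_conj (M W : Matrix n n ℂ) (hW : W ∈ Matrix.unitaryGroup n ℂ) :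
    (W * M * Wᴴ).charpoly = M.charpoly := by
  have h1 : W * Wᴴ = 1 := by
    simpa [Matrix.star_eq_conjTranspose] using (Matrix.mem_unitaryGroup_iff).mp hW
  have h2 : Wᴴ * W = 1 := by
    simpa [Matrix.star_eq_conjTranspose] using (Matrix.mem_unitaryGroup_iff').mp hW


  set f : Matrix n n ℂ →+* Matrix n n ℂ[X] := (C : ℂ →+* ℂ[X]).mapMatrix with hf
  have hfm : ∀ A B : Matrix n n ℂ, f (A * B) = f A * f B := fun A B => by exact _root_.map_mul f A B
  have key : charmatrix (W * M * Wᴴ) = f W * charmatrix M * f Wᴴ := by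
    have hc : Commute (Matrix.scalar n (X : ℂ[X])) (f W) :=
      Matrix.scalar_commute (X : ℂ[X]) (fun r => Commute.all _ _) _
    have h3 : f W * Matrix.scalar n (X : ℂ[X]) * f Wᴴ = Matrix.scalar n (X : ℂ[X]) := by
      rw [← hc.eq, mul_assoc, ← hfm, h1, _root_.map_one f, mul_one]
    calc charmatrix (W * M * Wᴴ)
        = Matrix.scalar n (X : ℂ[X]) - f (W * M * Wᴴ) := rfl
      _ = f W * Matrix.scalar n (X : ℂ[X]) * f Wᴴ - f W * f M * f Wᴴ := by
          rw [h3, hfm, hfm]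
      _ = f W * charmatrix M * f Wᴴ := by rw [charmatrix]; noncomm_ring
  have hdet : (f W).det * (f Wᴴ).det = 1 := by
    rw [← Matrix.det_mul, ← hfm, h1, _root_.map_one f, Matrix.det_one]
  rw [Matrix.charpoly, key, Matrix.det_mul, Matrix.det_mul, mul_right_comm, hdet, one_mul,
    Matrix.charpoly]


lemma my_charpoly_diagonal (d : n → ℂ) :
    (Matrix.diagonal d).charpoly = ∏ i, ((X : ℂ[X]) - C (d i)) := by
  have : charmatrix (Matrix.diagonal d) = Matrix.diagonal fun i => (X : ℂ[X]) - C (d i) := by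
    ext i j
    by_cases h : i = j
    · subst h; simp
    · simp [charmatrix_apply_ne _ _ _ h, Matrix.diagonal_apply_ne _ h, Matrix.diagonal_apply_ne d h]
  rw [Matrix.charpoly, this, det_diagonal]

/-- If a Hermitian matrix is unitarily similar to a real diagonal matrix, then any symmetric
function of its eigenvalues equals the same function of the diagonal entries. -/
lemma sum_f_eigenvalues {M : Matrix n n ℂ} (hM : M.IsHermitian) {W : Matrix n n ℂ}
    (hW : W ∈ Matrix.unitaryGroup n ℂ) {d : n → ℝ}
    (hMd : M = W * Matrix.diagonal (fun i => (d i : ℂ)) * Wᴴ) (g : ℝ → ℝ) :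
    ∑ i, g (hM.eigenvalues i) = ∑ i, g (d i) := by
  have hspec := hM.spectral_theorem
  have hV : (hM.eigenvectorUnitary : Matrix n n ℂ) ∈ Matrix.unitaryGroup n ℂ :=
    hM.eigenvectorUnitary.2
  have h1 : M.charpoly = ∏ i, ((X : ℂ[X]) - C ((hM.eigenvalues i : ℂ))) := by
    conv_lhs => rw [hspec, Unitary.conjStarAlgAut_apply]
    rw [show (star (hM.eigenvectorUnitary : Matrix n n ℂ))
        = (hM.eigenvectorUnitary : Matrix n n ℂ)ᴴ from rfl,
      my_charpoly_conj _ _ hV, my_charpoly_diagonal]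
    rfl
  have h2 : M.charpoly = ∏ i, ((X : ℂ[X]) - C ((d i : ℂ))) := by
    conv_lhs => rw [hMd]
    rw [my_charpoly_conj _ _ hW, my_charpoly_diagonal]
  -- compare root multisets
  have hroots : (Finset.univ.val.map fun i => ((hM.eigenvalues i : ℂ)))
      = Finset.univ.val.map fun i => ((d i : ℂ)) := by
    have e1 : M.charpoly = ((Finset.univ.val.map fun i => ((hM.eigenvalues i : ℂ))).map
        fun a => (X : ℂ[X]) - C a).prod := by
      rw [h1, Multiset.map_map]; rfl
    have e2 : M.charpoly = ((Finset.univ.val.map fun i => ((d i : ℂ))).map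
        fun a => (X : ℂ[X]) - C a).prod := by
      rw [h2, Multiset.map_map]; rfl
    have := congrArg Polynomial.roots (e1.symm.trans e2)
    rwa [Polynomial.roots_multiset_prod_X_sub_C, Polynomial.roots_multiset_prod_X_sub_C] at this
  have hreal : (Finset.univ.val.map fun i => hM.eigenvalues i)
      = Finset.univ.val.map fun i => d i := by
    apply Multiset.map_injective (f := (Complex.ofReal : ℝ → ℂ)) Complex.ofReal_injective
    rw [Multiset.map_map, Multiset.map_map]
    exact hroots
  calc ∑ i, g (hM.eigenvalues i)
      = ((Finset.univ.val.map fun i => hM.eigenvalues i).map g).sum := by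
        rw [Multiset.map_map]; rfl
    _ = ((Finset.univ.val.map fun i => d i).map g).sum := by rw [hreal]
    _ = ∑ i, g (d i) := by rw [Multiset.map_map]; rfl

lemma vnEntropy_eq {M : Matrix n n ℂ} (hM : M.IsHermitian) {W : Matrix n n ℂ}
    (hW : W ∈ Matrix.unitaryGroup n ℂ) {d : n → ℝ}
    (hMd : M = W * Matrix.diagonal (fun i => (d i : ℂ)) * Wᴴ) :
    vnEntropy M = (∑ i, Real.negMulLog (d i)) / Real.log 2 := by
  rw [vnEntropy, dif_pos hM, sum_f_eigenvalues hM hW hMd]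

lemma trace_eq_sum_d {M : Matrix n n ℂ} {W : Matrix n n ℂ}
    (hW : W ∈ Matrix.unitaryGroup n ℂ) {d : n → ℝ}
    (hMd : M = W * Matrix.diagonal (fun i => (d i : ℂ)) * Wᴴ) :
    M.trace = ∑ i, (d i : ℂ) := by
  have h2 : Wᴴ * W = 1 := by
    simpa [Matrix.star_eq_conjTranspose] using (Matrix.mem_unitaryGroup_iff').mp hW
  rw [hMd, Matrix.trace_mul_cycle, h2, one_mul, Matrix.trace_diagonal]

lemma conjTranspose_kron {m l : Type*} [Fintype m] [DecidableEq m] [Fintype l] [DecidableEq l]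
    (A : Matrix m m ℂ) (B : Matrix l l ℂ) : (A ⊗ₖ B)ᴴ = Aᴴ ⊗ₖ Bᴴ := by
  ext i j
  simp [Matrix.conjTranspose_apply, Matrix.kroneckerMap_apply]

lemma kron_mem_unitary {m l : Type*} [Fintype m] [DecidableEq m] [Fintype l] [DecidableEq l]
    {U : Matrix m m ℂ} {V : Matrix l l ℂ} (hU : U ∈ Matrix.unitaryGroup m ℂ)
    (hV : V ∈ Matrix.unitaryGroup l ℂ) : U ⊗ₖ V ∈ Matrix.unitaryGroup (m × l) ℂ := by
  rw [Matrix.mem_unitaryGroup_iff]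
  have hU1 : U * Uᴴ = 1 := by
    simpa [Matrix.star_eq_conjTranspose] using (Matrix.mem_unitaryGroup_iff).mp hU
  have hV1 : V * Vᴴ = 1 := by
    simpa [Matrix.star_eq_conjTranspose] using (Matrix.mem_unitaryGroup_iff).mp hV
  rw [Matrix.star_eq_conjTranspose, conjTranspose_kron, ← Matrix.mul_kronecker_mul, hU1, hV1,
    Matrix.one_kronecker_one]

lemma posSemidef_kron {m l : Type*} [Fintype m] [DecidableEq m] [Fintype l] [DecidableEq l]
    {A : Matrix m m ℂ} {B : Matrix l l ℂ} (hA : A.PosSemidef) (hB : B.PosSemidef) :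
    (A ⊗ₖ B).PosSemidef := by
  exact hA.kronecker hB

lemma herm_decomp {M : Matrix n n ℂ} (hM : M.IsHermitian) :
    M = (hM.eigenvectorUnitary : Matrix n n ℂ)
        * Matrix.diagonal (fun i => ((hM.eigenvalues i : ℝ) : ℂ))
        * (hM.eigenvectorUnitary : Matrix n n ℂ)ᴴ :=
  hM.spectral_theorem

lemma sum_eigenvalues_eq_one {M : Matrix n n ℂ} (hM : M.IsHermitian) (ht : M.trace = 1) :
    ∑ i, hM.eigenvalues i = 1 := by
  have := trace_eq_sum_d hM.eigenvectorUnitary.2 (herm_decomp hM)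
  rw [ht] at this
  exact_mod_cast this.symm

lemma vnEntropy_kron {m l : Type*} [Fintype m] [DecidableEq m] [Fintype l] [DecidableEq l]
    {A : Matrix m m ℂ} {B : Matrix l l ℂ} (hA : A.PosSemidef) (hAt : A.trace = 1)
    (hB : B.PosSemidef) (hBt : B.trace = 1) :
    vnEntropy (A ⊗ₖ B) = vnEntropy A + vnEntropy B := by
  have hsa : ∑ i, hA.1.eigenvalues i = 1 := sum_eigenvalues_eq_one hA.1 hAt
  have hsb : ∑ j, hB.1.eigenvalues j = 1 := sum_eigenvalues_eq_one hB.1 hBt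
  have hkron : A ⊗ₖ B
      = ((hA.1.eigenvectorUnitary : Matrix m m ℂ) ⊗ₖ (hB.1.eigenvectorUnitary : Matrix l l ℂ))
        * Matrix.diagonal (fun p : m × l => ((hA.1.eigenvalues p.1 * hB.1.eigenvalues p.2 : ℝ) : ℂ))
        * ((hA.1.eigenvectorUnitary : Matrix m m ℂ) ⊗ₖ (hB.1.eigenvectorUnitary : Matrix l l ℂ))ᴴ := by
    conv_lhs => rw [herm_decomp hA.1, herm_decomp hB.1, Matrix.mul_kronecker_mul,
      Matrix.mul_kronecker_mul, Matrix.diagonal_kronecker_diagonal]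
    rw [conjTranspose_kron]
    congr 2
    funext p
    push_cast
    ring
  rw [vnEntropy_eq (posSemidef_kron hA hB).1
      (kron_mem_unitary hA.1.eigenvectorUnitary.2 hB.1.eigenvectorUnitary.2) hkron,
    vnEntropy_eq hA.1 hA.1.eigenvectorUnitary.2 (herm_decomp hA.1),
    vnEntropy_eq hB.1 hB.1.eigenvectorUnitary.2 (herm_decomp hB.1)]
  rw [← add_div]
  congr 1
  rw [Fintype.sum_prod_type]
  simp_rw [Real.negMulLog_mul, Finset.sum_add_distrib, ← Finset.sum_mul, ← Finset.mul_sum, hsb]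
  rw [← Finset.sum_mul, hsa, one_mul, one_mul]

lemma diagPart_kron {m l : Type*} [Fintype m] [DecidableEq m] [Fintype l] [DecidableEq l]
    (A : Matrix m m ℂ) (B : Matrix l l ℂ) :
    diagPart (A ⊗ₖ B) = diagPart A ⊗ₖ diagPart B := by
  rw [diagPart, diagPart, diagPart, Matrix.diagonal_kronecker_diagonal]
  rfl

lemma diagPart_posSemidef {A : Matrix n n ℂ} (hA : A.PosSemidef) : (diagPart A).PosSemidef := by
  rw [diagPart]
  refine Matrix.posSemidef_diagonal_iff.mpr fun i => ?_
  have := hA.2 (Finsupp.single i 1)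
  simpa [dotProduct, Pi.single_apply] using this

lemma diagPart_trace (A : Matrix n n ℂ) : (diagPart A).trace = A.trace := by
  rw [diagPart, Matrix.trace_diagonal, Matrix.trace]
  rfl

lemma Cr_kron {m l : Type*} [Fintype m] [DecidableEq m] [Fintype l] [DecidableEq l]
    {A : Matrix m m ℂ} {B : Matrix l l ℂ} (hA : A.PosSemidef) (hAt : A.trace = 1)
    (hB : B.PosSemidef) (hBt : B.trace = 1) :
    Cr (A ⊗ₖ B) = Cr A + Cr B := by
  rw [Cr, Cr, Cr, diagPart_kron, vnEntropy_kron hA hAt hB hBt,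
    vnEntropy_kron (diagPart_posSemidef hA) ((diagPart_trace A).trans hAt)
      (diagPart_posSemidef hB) ((diagPart_trace B).trans hBt)]
  ring

lemma conj_posSemidef {σ U : Matrix n n ℂ} (hσ : σ.PosSemidef)
    (hU : U ∈ Matrix.unitaryGroup n ℂ) : (U * σ * Uᴴ).PosSemidef :=
  hσ.mul_mul_conjTranspose_same U

lemma conj_trace {σ U : Matrix n n ℂ} (ht : σ.trace = 1)
    (hU : U ∈ Matrix.unitaryGroup n ℂ) : (U * σ * Uᴴ).trace = 1 := by
  have h2 : Uᴴ * U = 1 := by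
    simpa [Matrix.star_eq_conjTranspose] using (Matrix.mem_unitaryGroup_iff').mp hU
  rw [Matrix.trace_mul_cycle, h2, one_mul, ht]

lemma CrB_kron {m l : Type*} [Fintype m] [DecidableEq m] [Fintype l] [DecidableEq l]
    {A : Matrix m m ℂ} {B : Matrix l l ℂ} (hA : A.PosSemidef) (hAt : A.trace = 1)
    (hB : B.PosSemidef) (hBt : B.trace = 1) {U : Matrix m m ℂ} {V : Matrix l l ℂ}
    (hU : U ∈ Matrix.unitaryGroup m ℂ) (hV : V ∈ Matrix.unitaryGroup l ℂ) :
    CrB (A ⊗ₖ B) (U ⊗ₖ V) = CrB A U + CrB B V := by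
  rw [CrB, CrB, CrB, conjTranspose_kron, ← Matrix.mul_kronecker_mul, ← Matrix.mul_kronecker_mul,
    Cr_kron (conj_posSemidef hA hU) (conj_trace hAt hU) (conj_posSemidef hB hV) (conj_trace hBt hV)]

lemma vnEntropy_nonneg {σ : Matrix n n ℂ} (hσ : σ.PosSemidef) (ht : σ.trace = 1) :
    0 ≤ vnEntropy σ := by
  rw [vnEntropy, dif_pos hσ.1]
  apply div_nonneg _ (Real.log_nonneg one_le_two)
  have hsum : ∑ i, hσ.1.eigenvalues i = 1 := sum_eigenvalues_eq_one hσ.1 ht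
  refine Finset.sum_nonneg fun i _ => Real.negMulLog_nonneg (hσ.eigenvalues_nonneg i) ?_
  calc hσ.1.eigenvalues i ≤ ∑ j, hσ.1.eigenvalues j :=
        Finset.single_le_sum (fun j _ => hσ.eigenvalues_nonneg j) (Finset.mem_univ i)
    _ = 1 := hsum

lemma negMulLog_two_le {p q : ℝ} (hp : 0 ≤ p) (hq : 0 ≤ q) (hpq : p + q = 1) :
    Real.negMulLog p + Real.negMulLog q ≤ Real.log 2 := by
  have h := Real.concaveOn_negMulLog.2 (Set.mem_Ici.mpr hp) (Set.mem_Ici.mpr hq)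
    (by norm_num : (0:ℝ) ≤ (1:ℝ)/2) (by norm_num : (0:ℝ) ≤ (1:ℝ)/2) (by norm_num)
  simp only [smul_eq_mul] at h
  rw [show (1:ℝ)/2 * p + 1/2 * q = 1/2 by linarith] at h
  have hval : Real.negMulLog (1/2) = 1/2 * Real.log 2 := by
    rw [Real.negMulLog]
    rw [show (1:ℝ)/2 = 2⁻¹ by norm_num, Real.log_inv]
    ring
  rw [hval] at h
  linarith

lemma vnEntropy_diagPart_le {σ : Matrix (Fin 2) (Fin 2) ℂ} (hσ : σ.PosSemidef)
    (ht : σ.trace = 1) : vnEntropy (diagPart σ) ≤ 1 := by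
  set p : Fin 2 → ℝ := fun i => (σ i i).re with hp
  have hci : ∀ i, σ i i = ((p i : ℝ) : ℂ) := fun i => by
    simpa [hp] using (hσ.1.coe_re_apply_self i).symm
  have hdiag : diagPart σ = Matrix.diagonal (fun i => ((p i : ℝ) : ℂ)) := by
    rw [diagPart]
    exact congrArg _ (funext hci)
  have hdec : diagPart σ = (1 : Matrix (Fin 2) (Fin 2) ℂ)
      * Matrix.diagonal (fun i => ((p i : ℝ) : ℂ)) * (1 : Matrix (Fin 2) (Fin 2) ℂ)ᴴ := by
    rw [Matrix.conjTranspose_one, one_mul, mul_one, hdiag]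
  have h1U : (1 : Matrix (Fin 2) (Fin 2) ℂ) ∈ Matrix.unitaryGroup (Fin 2) ℂ := by
    rw [Matrix.mem_unitaryGroup_iff]; simp
  rw [vnEntropy_eq (diagPart_posSemidef hσ).1 h1U hdec]
  have hnn : ∀ i, 0 ≤ p i := by
    intro i
    have := hσ.2 (Finsupp.single i 1)
    simp at this
    have h0 : (0:ℂ) ≤ σ i i := by
      simpa [dotProduct, Pi.single_apply] using hσ.2 (Finsupp.single i 1)
    exact (Complex.le_def.mp h0).1
  have hsum : p 0 + p 1 = 1 := by
    have : (σ.trace).re = 1 := by rw [ht]; simp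
    rw [Matrix.trace] at this
    simpa [Fin.sum_univ_two, Matrix.diag] using this
  have hlog : (0:ℝ) < Real.log 2 := Real.log_pos one_lt_two
  rw [div_le_one hlog, Fin.sum_univ_two]
  exact negMulLog_two_le (hnn 0) (hnn 1) hsum

lemma Cr_le_one {σ : Matrix (Fin 2) (Fin 2) ℂ} (hσ : σ.PosSemidef) (ht : σ.trace = 1) :
    Cr σ ≤ 1 := by
  have := vnEntropy_nonneg hσ ht
  have := vnEntropy_diagPart_le hσ ht
  rw [Cr]
  linarith

lemma CrB_le_one {σ U : Matrix (Fin 2) (Fin 2) ℂ} (hσ : σ.PosSemidef) (ht : σ.trace = 1)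
    (hU : U ∈ Matrix.unitaryGroup (Fin 2) ℂ) : CrB σ U ≤ 1 :=
  Cr_le_one (conj_posSemidef hσ hU) (conj_trace ht hU)


theorem stmt_6
    (ρA ρB ρC : Matrix (Fin 2) (Fin 2) ℂ)
    (hA : ρA.PosSemidef) (hA1 : ρA.trace = 1)
    (hB : ρB.PosSemidef) (hB1 : ρB.trace = 1)
    (hC : ρC.PosSemidef) (hC1 : ρC.trace = 1)
    (UA1 UA2 UB1 UB2 UC1 UC2 : Matrix (Fin 2) (Fin 2) ℂ)
    (hUA1 : UA1 ∈ Matrix.unitaryGroup (Fin 2) ℂ)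
    (hUA2 : UA2 ∈ Matrix.unitaryGroup (Fin 2) ℂ)
    (hUB1 : UB1 ∈ Matrix.unitaryGroup (Fin 2) ℂ)
    (hUB2 : UB2 ∈ Matrix.unitaryGroup (Fin 2) ℂ)
    (hUC1 : UC1 ∈ Matrix.unitaryGroup (Fin 2) ℂ)
    (hUC2 : UC2 ∈ Matrix.unitaryGroup (Fin 2) ℂ) :
    CrB (ρA ⊗ₖ ρB ⊗ₖ ρC) (UA1 ⊗ₖ UB1 ⊗ₖ UC2)
        + CrB (ρA ⊗ₖ ρB ⊗ₖ ρC) (UA1 ⊗ₖ UB2 ⊗ₖ UC1)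
        + CrB (ρA ⊗ₖ ρB ⊗ₖ ρC) (UA2 ⊗ₖ UB1 ⊗ₖ UC1)
        - CrB (ρA ⊗ₖ ρB ⊗ₖ ρC) (UA2 ⊗ₖ UB2 ⊗ₖ UC2)
      = 2 * (CrB ρA UA1 + CrB ρB UB1 + CrB ρC UC1) ∧
    CrB (ρA ⊗ₖ ρB ⊗ₖ ρC) (UA1 ⊗ₖ UB1 ⊗ₖ UC2)
        + CrB (ρA ⊗ₖ ρB ⊗ₖ ρC) (UA1 ⊗ₖ UB2 ⊗ₖ UC1)
        + CrB (ρA ⊗ₖ ρB ⊗ₖ ρC) (UA2 ⊗ₖ UB1 ⊗ₖ UC1)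
        - CrB (ρA ⊗ₖ ρB ⊗ₖ ρC) (UA2 ⊗ₖ UB2 ⊗ₖ UC2) ≤ 6 := by
  have hAB : (ρA ⊗ₖ ρB).PosSemidef := posSemidef_kron hA hB
  have hABt : (ρA ⊗ₖ ρB).trace = 1 := by
    rw [Matrix.trace_kronecker, hA1, hB1, mul_one]
  have split : ∀ (VA VB VC : Matrix (Fin 2) (Fin 2) ℂ),
      VA ∈ Matrix.unitaryGroup (Fin 2) ℂ → VB ∈ Matrix.unitaryGroup (Fin 2) ℂ →
      VC ∈ Matrix.unitaryGroup (Fin 2) ℂ →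
      CrB (ρA ⊗ₖ ρB ⊗ₖ ρC) (VA ⊗ₖ VB ⊗ₖ VC) = CrB ρA VA + CrB ρB VB + CrB ρC VC := by
    intro VA VB VC hVA hVB hVC
    rw [CrB_kron hAB hABt hC hC1 (kron_mem_unitary hVA hVB) hVC,
      CrB_kron hA hA1 hB hB1 hVA hVB]
  rw [split _ _ _ hUA1 hUB1 hUC2, split _ _ _ hUA1 hUB2 hUC1, split _ _ _ hUA2 hUB1 hUC1,
    split _ _ _ hUA2 hUB2 hUC2]
  constructor
  · ring
  · have h1 := CrB_le_one hA hA1 hUA1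
    have h2 := CrB_le_one hB hB1 hUB1
    have h3 := CrB_le_one hC hC1 hUC1
    linarith
end

section
/- For p ∈ (0,1), the function B(p) = ((8−5p)/24) log₂((8−5p)/24) − ((4−p)/3) log₂((4−p)/24) + (3p/8) log₂(p/8) − ((2+p)/2) log₂((2+p)/24) is strictly greater than 6. -/
open Real Set

private lemma hasDerivF {x : ℝ} (hx : 0 < x) :
    HasDerivAt (fun y : ℝ => Real.log y - 2 * (y - 1) / (y + 1))
      ((x - 1) ^ 2 / (x * (x + 1) ^ 2)) x := by
  have hx1 : (x + 1) ≠ 0 := by linarith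
  have h1 : HasDerivAt (fun y : ℝ => 2 * (y - 1) / (y + 1))
      ((2 * 1 * (x + 1) - 2 * (x - 1) * 1) / ((x + 1) ^ 2)) x :=
    (((hasDerivAt_id' x).sub_const 1).const_mul 2).div ((hasDerivAt_id' x).add_const 1) hx1
  have h2 := (Real.hasDerivAt_log hx.ne').sub h1
  refine h2.congr_deriv ?_
  field_simp
  ring

private lemma hasDerivG {x : ℝ} (hx : 0 < x) :
    HasDerivAt (fun y : ℝ => (y - 1 / y) / 2 - Real.log y)
      ((x - 1) ^ 2 / (2 * x ^ 2) ) x := by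
  have h1 : HasDerivAt (fun y : ℝ => (y - 1 / y) / 2)
      ((1 - (-1 / x ^ 2)) / 2) x := by
    have hinv : HasDerivAt (fun y : ℝ => 1 / y) (-1 / x ^ 2) x := by
      have h := hasDerivAt_inv hx.ne'
      have e : -(x ^ 2)⁻¹ = -1 / x ^ 2 := by field_simp
      rw [← e]
      simpa [one_div] using h
    exact ((hasDerivAt_id' x).sub hinv).div_const 2
  have h2 := h1.sub (Real.hasDerivAt_log hx.ne')
  refine h2.congr_deriv ?_
  field_simp
  ring

private lemma monoF :
    MonotoneOn (fun y : ℝ => Real.log y - 2 * (y - 1) / (y + 1)) (Set.Ioi 0) := by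
  apply monotoneOn_of_deriv_nonneg (convex_Ioi 0)
  · intro x hx
    exact ((hasDerivF hx).continuousAt).continuousWithinAt
  · intro x hx
    rw [interior_Ioi] at hx
    exact ((hasDerivF hx).differentiableAt).differentiableWithinAt
  · intro x hx
    rw [interior_Ioi] at hx
    have hx' : (0:ℝ) < x := hx
    rw [(hasDerivF hx').deriv]
    exact div_nonneg (sq_nonneg _) (mul_nonneg hx'.le (sq_nonneg _))

private lemma monoG :
    MonotoneOn (fun y : ℝ => (y - 1 / y) / 2 - Real.log y) (Set.Ioi 0) := by
  apply monotoneOn_of_deriv_nonneg (convex_Ioi 0)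
  · intro x hx
    exact ((hasDerivG hx).continuousAt).continuousWithinAt
  · intro x hx
    rw [interior_Ioi] at hx
    exact ((hasDerivG hx).differentiableAt).differentiableWithinAt
  · intro x hx
    rw [interior_Ioi] at hx
    have hx' : (0:ℝ) < x := hx
    rw [(hasDerivG hx').deriv]
    positivity

private lemma pade_low {y : ℝ} (hy : 1 ≤ y) : 2 * (y - 1) / (y + 1) ≤ Real.log y := by
  have h : Real.log 1 - 2 * (1 - 1) / (1 + 1) ≤ Real.log y - 2 * (y - 1) / (y + 1) :=
    monoF (Set.mem_Ioi.2 one_pos) (Set.mem_Ioi.2 (by linarith : (0:ℝ) < y)) hy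
  have h0 : Real.log 1 - 2 * ((1:ℝ) - 1) / (1 + 1) = 0 := by
    norm_num [Real.log_one]
  rw [h0] at h
  linarith

private lemma pade_up {y : ℝ} (hy0 : 0 < y) (hy : y ≤ 1) :
    Real.log y ≤ 2 * (y - 1) / (y + 1) := by
  have h : Real.log y - 2 * (y - 1) / (y + 1) ≤ Real.log 1 - 2 * (1 - 1) / (1 + 1) :=
    monoF (Set.mem_Ioi.2 hy0) (Set.mem_Ioi.2 one_pos) hy
  have h0 : Real.log 1 - 2 * ((1:ℝ) - 1) / (1 + 1) = 0 := by
    norm_num [Real.log_one]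
  rw [h0] at h
  linarith

private lemma half_up {y : ℝ} (hy : 1 ≤ y) : Real.log y ≤ (y - 1 / y) / 2 := by
  have h : ((1:ℝ) - 1 / 1) / 2 - Real.log 1 ≤ (y - 1 / y) / 2 - Real.log y :=
    monoG (Set.mem_Ioi.2 one_pos) (Set.mem_Ioi.2 (by linarith : (0:ℝ) < y)) hy
  have h0 : ((1:ℝ) - 1 / 1) / 2 - Real.log 1 = 0 := by
    norm_num [Real.log_one]
  rw [h0] at h
  linarith

private lemma half_low {y : ℝ} (hy0 : 0 < y) (hy : y ≤ 1) : (y - 1 / y) / 2 ≤ Real.log y := by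
  have h : (y - 1 / y) / 2 - Real.log y ≤ ((1:ℝ) - 1 / 1) / 2 - Real.log 1 :=
    monoG (Set.mem_Ioi.2 hy0) (Set.mem_Ioi.2 one_pos) hy
  have h0 : ((1:ℝ) - 1 / 1) / 2 - Real.log 1 = 0 := by
    norm_num [Real.log_one]
  rw [h0] at h
  linarith

set_option maxHeartbeats 1000000 in
/-- The Bell-type combination `B_{C_r}` for the W-class mixed state
`ρ_W = (p/8) I₈ + (1-p)|W⟩⟨W|` is strictly greater than 6 for `p ∈ (0,1)`. -/
theorem stmt_16 (p : ℝ) (hp : p ∈ Set.Ioo (0:ℝ) 1) :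
    ((8 - 5 * p) / 24) * Real.logb 2 ((8 - 5 * p) / 24)
      - ((4 - p) / 3) * Real.logb 2 ((4 - p) / 24)
      + (3 * p / 8) * Real.logb 2 (p / 8)
      - ((2 + p) / 2) * Real.logb 2 ((2 + p) / 24) > 6 := by
  obtain ⟨hp0, hp1⟩ := hp
  have hL : (0:ℝ) < Real.log 2 := Real.log_pos (by norm_num)
  have h85 : (0:ℝ) < 8 - 5 * p := by linarith
  have h4p : (0:ℝ) < 4 - p := by linarith
  have h2p : (0:ℝ) < 2 + p := by linarith
  have h11 : (0:ℝ) < 11 - 5 * p := by linarith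
  have h5p : (0:ℝ) < 5 + p := by linarith
  have h1p : (0:ℝ) < 1 - p := by linarith
  have hlog8 : Real.log 8 = 3 * Real.log 2 := by
    rw [show (8:ℝ) = 2 ^ 3 by norm_num, Real.log_pow]
    push_cast; ring
  -- split logs
  have e1 : Real.log ((8 - 5 * p) / 24) = Real.log ((8 - 5 * p) / 3) - 3 * Real.log 2 := by
    rw [show (8 - 5 * p) / 24 = ((8 - 5 * p) / 3) / 8 by ring,
      Real.log_div (by positivity) (by norm_num), hlog8]
  have e2 : Real.log ((4 - p) / 24) = Real.log ((4 - p) / 3) - 3 * Real.log 2 := by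
    rw [show (4 - p) / 24 = ((4 - p) / 3) / 8 by ring,
      Real.log_div (by positivity) (by norm_num), hlog8]
  have e3 : Real.log (p / 8) = Real.log p - 3 * Real.log 2 := by
    rw [Real.log_div hp0.ne' (by norm_num), hlog8]
  have e4 : Real.log ((2 + p) / 24) = Real.log ((2 + p) / 3) - 3 * Real.log 2 := by
    rw [show (2 + p) / 24 = ((2 + p) / 3) / 8 by ring,
      Real.log_div (by positivity) (by norm_num), hlog8]
  -- the four Padé-type bounds
  have b1 : 2 * ((8 - 5 * p) / 3 - 1) / ((8 - 5 * p) / 3 + 1) ≤ Real.log ((8 - 5 * p) / 3) :=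
    pade_low (by nlinarith)
  have b2 : Real.log ((4 - p) / 3) ≤ ((4 - p) / 3 - 1 / ((4 - p) / 3)) / 2 :=
    half_up (by nlinarith)
  have b3 : (p - 1 / p) / 2 ≤ Real.log p := half_low hp0 hp1.le
  have b4 : Real.log ((2 + p) / 3) ≤ 2 * ((2 + p) / 3 - 1) / ((2 + p) / 3 + 1) :=
    pade_up (by positivity) (by nlinarith)
  -- cleared forms of the weighted bounds
  have h1 : 5 * (8 - 5 * p) * (1 - p) / (12 * (11 - 5 * p))
      ≤ ((8 - 5 * p) / 24) * Real.log ((8 - 5 * p) / 3) := by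
    have hm := mul_le_mul_of_nonneg_left b1 (by positivity : (0:ℝ) ≤ (8 - 5 * p) / 24)
    have eq : ((8 - 5 * p) / 24) * (2 * ((8 - 5 * p) / 3 - 1) / ((8 - 5 * p) / 3 + 1))
        = 5 * (8 - 5 * p) * (1 - p) / (12 * (11 - 5 * p)) := by
      field_simp
      ring
    linarith [eq ▸ hm]
  have h2 : ((4 - p) / 3) * Real.log ((4 - p) / 3) ≤ (1 - p) * (7 - p) / 18 := by
    have hm := mul_le_mul_of_nonneg_left b2 (by positivity : (0:ℝ) ≤ (4 - p) / 3)
    have eq : ((4 - p) / 3) * (((4 - p) / 3 - 1 / ((4 - p) / 3)) / 2)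
        = (1 - p) * (7 - p) / 18 := by
      field_simp
      ring
    linarith [eq ▸ hm]
  have h3 : (3 / 16) * (p ^ 2 - 1) ≤ (3 * p / 8) * Real.log p := by
    have hm := mul_le_mul_of_nonneg_left b3 (by positivity : (0:ℝ) ≤ 3 * p / 8)
    have eq : (3 * p / 8) * ((p - 1 / p) / 2) = (3 / 16) * (p ^ 2 - 1) := by
      field_simp
      ring
    linarith [eq ▸ hm]
  have h4 : ((2 + p) / 2) * Real.log ((2 + p) / 3) ≤ (2 + p) * (p - 1) / (5 + p) := by
    have hm := mul_le_mul_of_nonneg_left b4 (by positivity : (0:ℝ) ≤ (2 + p) / 2)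
    have eq : ((2 + p) / 2) * (2 * ((2 + p) / 3 - 1) / ((2 + p) / 3 + 1))
        = (2 + p) * (p - 1) / (5 + p) := by
      field_simp
      ring
    linarith [eq ▸ hm]
  -- the rational lower bound is strictly positive
  have hQ : 0 < 5 * (8 - 5 * p) * (1 - p) / (12 * (11 - 5 * p))
      - (1 - p) * (7 - p) / 18 + (3 / 16) * (p ^ 2 - 1) - (2 + p) * (p - 1) / (5 + p) := by
    have eq : 5 * (8 - 5 * p) * (1 - p) / (12 * (11 - 5 * p))
        - (1 - p) * (7 - p) / 18 + (3 / 16) * (p ^ 2 - 1) - (2 + p) * (p - 1) / (5 + p)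
        = (1 - p) ^ 2 * (1003 + 244 * p - 95 * p ^ 2) / (144 * (11 - 5 * p) * (5 + p)) := by
      field_simp
      ring
    rw [eq]
    have hnum : (0:ℝ) < 1003 + 244 * p - 95 * p ^ 2 := by nlinarith
    exact div_pos (mul_pos (pow_pos h1p 2) hnum) (by positivity)
  -- key strict inequality on the centered combination
  have hK : 0 < ((8 - 5 * p) / 24) * Real.log ((8 - 5 * p) / 3)
      - ((4 - p) / 3) * Real.log ((4 - p) / 3)
      + (3 * p / 8) * Real.log p
      - ((2 + p) / 2) * Real.log ((2 + p) / 3) := by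
    linarith [h1, h2, h3, h4, hQ]
  -- assemble
  have expand : ((8 - 5 * p) / 24) * Real.logb 2 ((8 - 5 * p) / 24)
      - ((4 - p) / 3) * Real.logb 2 ((4 - p) / 24)
      + (3 * p / 8) * Real.logb 2 (p / 8)
      - ((2 + p) / 2) * Real.logb 2 ((2 + p) / 24)
      = (((8 - 5 * p) / 24) * Real.log ((8 - 5 * p) / 3)
        - ((4 - p) / 3) * Real.log ((4 - p) / 3)
        + (3 * p / 8) * Real.log p
        - ((2 + p) / 2) * Real.log ((2 + p) / 3)) / Real.log 2 + 6 := by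
    simp only [Real.logb, e1, e2, e3, e4]
    field_simp
    ring
  rw [expand]
  have hpos := div_pos hK hL
  linarith
end
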